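/- arXiv:1808.04417 — 6 statements merged into one kernel-verified Lean document; each statement's English description precedes it below -/
import Mathlib

section
/- On every full strip (a maximal connected collinear set of pixels) of a grid graph, any cycle cover makes an even number of turns, where a U-turn counts as two turns. -/
/-- A pixel is a point of the integer lattice. -/
abbrev Pixel : Type := ℤ × ℤ

/-- A unit step in one of the four axis directions. -/
def IsUnitStep (d : Pixel) : Prop := d = (1, 0) ∨ d = (-1, 0) ∨ d = (0, 1) ∨ d = (0, -1)

/-- A closed walk with `n+1` edge traversals in the integer grid: a cyclic sequence of
vertices, consecutive ones at distance 1. -/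
structure GridWalk (n : ℕ) where
  v : ZMod (n + 1) → Pixel
  step : ∀ i, IsUnitStep (v (i + 1) - v i)

namespace GridWalk

variable {n : ℕ}

/-- Direction of the `i`-th step. -/
def dir (w : GridWalk n) (i : ZMod (n + 1)) : Pixel := w.v (i + 1) - w.v i

/-- Turn cost at a vertex visit with incoming direction `din` and outgoing direction `dout`:
going straight costs 0, a 90° turn costs 1, a U-turn costs 2. -/
def turnCost (din dout : Pixel) : ℕ :=
  if dout = din then 0 else if dout = -din then 2 else 1

/-- Turn cost at the `i`-th vertex visit. -/
def turnAt (w : GridWalk n) (i : ZMod (n + 1)) : ℕ := turnCost (w.dir (i - 1)) (w.dir i)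

/-- Total number of turns of the walk (U-turns counting twice). -/
def turns (w : GridWalk n) : ℕ := ∑ i, w.turnAt i

/-- Number of turns the walk makes at pixels of the set `S` (U-turns counting twice). -/
noncomputable def turnsIn (w : GridWalk n) (S : Set Pixel) : ℕ :=
  ∑ i, S.indicator (fun _ => w.turnAt i) (w.v i)

end GridWalk

/-- A cycle cover of the grid graph with pixel set `P`: a finite collection of closed walks
inside `P` that together visit every pixel of `P`. -/
structure CycleCover (P : Set Pixel) where
  k : ℕ
  len : Fin k → ℕ
  walk : (j : Fin k) → GridWalk (len j)
  mem : ∀ j i, (walk j).v i ∈ P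
  covers : ∀ p ∈ P, ∃ j i, (walk j).v i = p

namespace CycleCover

variable {P : Set Pixel}

/-- Number of turns the cycle cover makes at pixels of the set `S`. -/
noncomputable def turnsIn (C : CycleCover P) (S : Set Pixel) : ℕ :=
  ∑ j, (C.walk j).turnsIn S

/-- Total number of turns of the cycle cover. -/
def totalTurns (C : CycleCover P) : ℕ := ∑ j, (C.walk j).turns

end CycleCover

/-- The horizontal full strip of the grid graph `P` through the pixel `p`: all pixels in the
same row as `p` that are connected to `p` within `P` along that row. -/
def hStrip (P : Set Pixel) (p : Pixel) : Set Pixel :=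
  {q | q.2 = p.2 ∧ ∀ x : ℤ, min p.1 q.1 ≤ x → x ≤ max p.1 q.1 → ((x, p.2) : Pixel) ∈ P}

/-- The vertical full strip of the grid graph `P` through the pixel `p`. -/
def vStrip (P : Set Pixel) (p : Pixel) : Set Pixel :=
  {q | q.1 = p.1 ∧ ∀ y : ℤ, min p.2 q.2 ≤ y → y ≤ max p.2 q.2 → ((p.1, y) : Pixel) ∈ P}

/-- A full strip of the grid graph `P`: a maximal connected collinear set of pixels. -/
def IsFullStrip (P : Set Pixel) (S : Set Pixel) : Prop :=
  ∃ p ∈ P, S = hStrip P p ∨ S = vStrip P p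


open GridWalk in
lemma even_walk_turnsIn {n : ℕ} (w : GridWalk n) (S : Set Pixel) (A : Pixel → Bool)
    (hcost : ∀ d1 d2, IsUnitStep d1 → IsUnitStep d2 →
      turnCost d1 d2 % 2 = if A d1 = A d2 then 0 else 1)
    (hstep : ∀ i, A (w.dir i) = true → (w.v i ∈ S ↔ w.v (i + 1) ∈ S)) :
    w.turnsIn S % 2 = 0 := by
  classical
  set h : ZMod (n + 1) → ℕ := fun i => if A (w.dir i) = true ∧ w.v i ∈ S then 1 else 0 with hh
  have hds : ∀ j, IsUnitStep (w.dir j) := w.step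
  have key : ∀ i, S.indicator (fun _ => w.turnAt i) (w.v i) % 2 = (h (i - 1) + h i) % 2 := by
    intro i
    have hi1 : w.v (i - 1 + 1) = w.v i := by rw [sub_add_cancel]
    by_cases hv : w.v i ∈ S
    · rw [Set.indicator_of_mem hv]
      have h1 : h (i - 1) = if A (w.dir (i - 1)) = true then 1 else 0 := by
        by_cases hA : A (w.dir (i - 1)) = true
        · have hiff := hstep (i - 1) hA
          rw [hi1] at hiff
          simp [hh, hA, hiff.mpr hv]
        · simp [hh, hA]
      have h2 : h i = if A (w.dir i) = true then 1 else 0 := by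
        by_cases hA : A (w.dir i) = true <;> simp [hh, hA, hv]
      rw [h1, h2, GridWalk.turnAt, hcost _ _ (hds _) (hds _)]
      rcases Bool.eq_false_or_eq_true (A (w.dir (i - 1))) with hb1 | hb1 <;>
        rcases Bool.eq_false_or_eq_true (A (w.dir i)) with hb2 | hb2 <;>
        simp [hb1, hb2]
    · rw [Set.indicator_of_notMem hv]
      have h2 : h i = 0 := by simp [hh, hv]
      have h1 : h (i - 1) = 0 := by
        by_cases hA : A (w.dir (i - 1)) = true
        · have hiff := hstep (i - 1) hA
          rw [hi1] at hiff
          have hv' : w.v (i - 1) ∉ S := fun hs => hv (hiff.mp hs)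
          simp [hh, hv']
        · simp [hh, hA]
      simp [h1, h2]
  calc w.turnsIn S % 2
      = (∑ i, S.indicator (fun _ => w.turnAt i) (w.v i) % 2) % 2 := by
        rw [GridWalk.turnsIn, Finset.sum_nat_mod]
    _ = (∑ i, (h (i - 1) + h i) % 2) % 2 := by simp_rw [key]
    _ = (∑ i, (h (i - 1) + h i)) % 2 := by rw [← Finset.sum_nat_mod]
    _ = ((∑ i, h (i - 1)) + ∑ i, h i) % 2 := by rw [Finset.sum_add_distrib]
    _ = ((∑ i, h i) + ∑ i, h i) % 2 := by
        rw [Fintype.sum_equiv (Equiv.subRight (1 : ZMod (n + 1))) (fun i => h (i - 1)) h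
          (fun i => rfl)]
    _ = 0 := by omega

lemma hStrip_adj (P : Set Pixel) (p q q' : Pixel) (hq : q ∈ hStrip P p) (hq' : q' ∈ P)
    (hd : q' - q = ((1 : ℤ), (0 : ℤ)) ∨ q' - q = (-1, 0)) : q' ∈ hStrip P p := by
  obtain ⟨h2, hall⟩ := hq
  have hd1 : (q'.1 = q.1 + 1 ∧ q'.2 = q.2) ∨ (q'.1 = q.1 - 1 ∧ q'.2 = q.2) := by
    rcases hd with h | h <;> [left; right] <;>
      · rw [Prod.ext_iff, Prod.fst_sub, Prod.snd_sub] at h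
        omega
  refine ⟨by omega, fun x hx1 hx2 => ?_⟩
  by_cases hc : min p.1 q.1 ≤ x ∧ x ≤ max p.1 q.1
  · exact hall x hc.1 hc.2
  · have hx : x = q'.1 := by omega
    have he : ((x, p.2) : Pixel) = q' := by rw [Prod.ext_iff]; constructor <;> simp <;> omega
    rwa [he]

lemma vStrip_adj (P : Set Pixel) (p q q' : Pixel) (hq : q ∈ vStrip P p) (hq' : q' ∈ P)
    (hd : q' - q = ((0 : ℤ), (1 : ℤ)) ∨ q' - q = (0, -1)) : q' ∈ vStrip P p := by
  obtain ⟨h1, hall⟩ := hq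
  have hd1 : (q'.2 = q.2 + 1 ∧ q'.1 = q.1) ∨ (q'.2 = q.2 - 1 ∧ q'.1 = q.1) := by
    rcases hd with h | h <;> [left; right] <;>
      · rw [Prod.ext_iff, Prod.fst_sub, Prod.snd_sub] at h
        omega
  refine ⟨by omega, fun y hy1 hy2 => ?_⟩
  by_cases hc : min p.2 q.2 ≤ y ∧ y ≤ max p.2 q.2
  · exact hall y hc.1 hc.2
  · have hy : y = q'.2 := by omega
    have he : ((p.1, y) : Pixel) = q' := by rw [Prod.ext_iff]; constructor <;> simp <;> omega
    rwa [he]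

/-- On every full strip of a grid graph, any cycle cover makes an even number
of turns (U-turns counting as two). -/
theorem strip_turns_even (P S : Set Pixel) (hS : IsFullStrip P S) (C : CycleCover P) :
    Even (C.turnsIn S) := by
  classical
  obtain ⟨p, hp, hS | hS⟩ := hS <;> subst hS <;>
    rw [Nat.even_iff, CycleCover.turnsIn, Finset.sum_nat_mod]
  · -- horizontal strip
    have hz : ∀ j, (C.walk j).turnsIn (hStrip P p) % 2 = 0 := by
      intro j
      apply even_walk_turnsIn _ _ (fun d => decide (d.2 = 0))
      · intro d1 d2 h1 h2
        rcases h1 with rfl | rfl | rfl | rfl <;> rcases h2 with rfl | rfl | rfl | rfl <;> decide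
      · intro i hA
        have hA2 : ((C.walk j).dir i).2 = 0 := of_decide_eq_true hA
        have hu : IsUnitStep ((C.walk j).dir i) := (C.walk j).step i
        have hd : (C.walk j).dir i = ((1 : ℤ), (0 : ℤ)) ∨ (C.walk j).dir i = (-1, 0) := by
          rcases hu with h | h | h | h <;> rw [h] at hA2 ⊢ <;> simp_all
        have hfwd : (C.walk j).v (i + 1) - (C.walk j).v i = (C.walk j).dir i := rfl
        have hbwd : (C.walk j).v i - (C.walk j).v (i + 1) = -((C.walk j).dir i) := by
          rw [← hfwd, neg_sub]
        constructor
        · intro hmem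
          refine hStrip_adj P p _ _ hmem (C.mem j (i + 1)) ?_
          rw [hfwd]; exact hd
        · intro hmem
          refine hStrip_adj P p _ _ hmem (C.mem j i) ?_
          rw [hbwd]
          rcases hd with h | h <;> rw [h] <;> [right; left] <;> decide
    simp [hz]
  · -- vertical strip
    have hz : ∀ j, (C.walk j).turnsIn (vStrip P p) % 2 = 0 := by
      intro j
      apply even_walk_turnsIn _ _ (fun d => decide (d.1 = 0))
      · intro d1 d2 h1 h2
        rcases h1 with rfl | rfl | rfl | rfl <;> rcases h2 with rfl | rfl | rfl | rfl <;> decide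
      · intro i hA
        have hA2 : ((C.walk j).dir i).1 = 0 := of_decide_eq_true hA
        have hu : IsUnitStep ((C.walk j).dir i) := (C.walk j).step i
        have hd : (C.walk j).dir i = ((0 : ℤ), (1 : ℤ)) ∨ (C.walk j).dir i = (0, -1) := by
          rcases hu with h | h | h | h <;> rw [h] at hA2 ⊢ <;> simp_all
        have hfwd : (C.walk j).v (i + 1) - (C.walk j).v i = (C.walk j).dir i := rfl
        have hbwd : (C.walk j).v i - (C.walk j).v (i + 1) = -((C.walk j).dir i) := by
          rw [← hfwd, neg_sub]
        constructor
        · intro hmem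
          refine vStrip_adj P p _ _ hmem (C.mem j (i + 1)) ?_
          rw [hfwd]; exact hd
        · intro hmem
          refine vStrip_adj P p _ _ hmem (C.mem j i) ?_
          rw [hbwd]
          rcases hd with h | h <;> rw [h] <;> [right; left] <;> decide
    simp [hz]
end

section
/- Let p be a pixel of a grid graph and C a cycle cover. If no walk of C makes a turn at p, then either there is a turn at some pixel strictly to the left of p and a turn at some pixel strictly to the right of p on the horizontal full strip through p, or there is a turn at some pixel strictly above p and a turn at some pixel strictly below p on the vertical full strip through p. -/
namespace GridWalk

variable {n : ℕ}

lemma v_add_one (w : GridWalk n) (i : ZMod (n+1)) : w.v (i + 1) = w.v i + w.dir i := by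
  simp [GridWalk.dir]

lemma not_forall_dir (w : GridWalk n) (d : Pixel) (hall : ∀ j, w.dir j = d) : False := by
  have hd : IsUnitStep d := hall 0 ▸ w.step 0
  have key : ∀ t : ℕ, w.v ((t : ZMod (n+1))) = w.v 0 + (t : ℤ) • d := by
    intro t
    induction t with
    | zero => simp
    | succ s ih =>
      have hc : ((s+1 : ℕ) : ZMod (n+1)) = (s : ZMod (n+1)) + 1 := by push_cast; ring
      rw [hc, w.v_add_one, ih, hall]
      push_cast
      rw [add_smul, one_smul, add_assoc]
  have h1 := key (n+1)
  rw [ZMod.natCast_self] at h1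
  have h2 : (((n:ℤ)+1)) • d = 0 := by
    push_cast at h1
    exact left_eq_add.mp h1
  rcases hd with h|h|h|h <;> subst h <;>
    simp [Prod.ext_iff, smul_eq_mul] at h2 <;> omega

lemma exists_forward_turn (w : GridWalk n) (i : ZMod (n+1)) :
    ∃ t : ℕ, 1 ≤ t ∧ (∀ s : ℕ, s ≤ t → w.v (i + (s : ZMod (n+1))) = w.v i + (s : ℤ) • w.dir i) ∧
      w.turnAt (i + (t : ZMod (n+1))) ≠ 0 := by
  have hex : ∃ t : ℕ, w.dir (i + (t : ZMod (n+1))) ≠ w.dir i := by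
    by_contra hc
    push_neg at hc
    refine w.not_forall_dir (w.dir i) (fun j => ?_)
    have h := hc ((j - i).val)
    rwa [show i + (((j - i).val : ℕ) : ZMod (n+1)) = j from by
      simp [ZMod.natCast_val, ZMod.cast_id]] at h
  obtain ⟨t, hspec, hminraw⟩ :
      ∃ t : ℕ, w.dir (i + (t : ZMod (n+1))) ≠ w.dir i ∧
        ∀ s : ℕ, s < t → ¬ w.dir (i + (s : ZMod (n+1))) ≠ w.dir i :=
    ⟨Nat.find hex, Nat.find_spec hex, fun s hs => Nat.find_min hex hs⟩
  have hmin : ∀ s, s < t → w.dir (i + (s : ZMod (n+1))) = w.dir i :=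
    fun s hs => not_not.mp (hminraw s hs)
  have ht1 : 1 ≤ t := by
    by_contra h0
    have ht0 : t = 0 := by omega
    rw [ht0] at hspec
    simp at hspec
  have hvv : ∀ s : ℕ, s ≤ t → w.v (i + (s : ZMod (n+1))) = w.v i + (s : ℤ) • w.dir i := by
    intro s
    induction s with
    | zero => intro _; simp
    | succ s ih =>
      intro hs
      have hcast : ((s+1 : ℕ) : ZMod (n+1)) = (s : ZMod (n+1)) + 1 := by push_cast; ring
      rw [hcast, ← add_assoc, w.v_add_one, ih (by omega), hmin s (by omega)]
      push_cast
      rw [add_smul, one_smul, add_assoc]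
  refine ⟨t, ht1, hvv, ?_⟩
  have hprev : w.dir (i + (t : ZMod (n+1)) - 1) = w.dir i := by
    have hc : (t : ZMod (n+1)) = ((t-1 : ℕ) : ZMod (n+1)) + 1 := by
      conv_lhs => rw [show t = (t-1) + 1 by omega]
      push_cast; ring
    rw [hc, show i + (((t-1 : ℕ) : ZMod (n+1)) + 1) - 1 = i + ((t-1 : ℕ) : ZMod (n+1)) from by
      ring]
    exact hmin (t-1) (by omega)
  unfold GridWalk.turnAt
  rw [hprev]
  unfold GridWalk.turnCost
  rw [if_neg hspec]
  split <;> simp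

lemma exists_backward_turn (w : GridWalk n) (i : ZMod (n+1))
    (hstraight : w.dir (i - 1) = w.dir i) :
    ∃ t : ℕ, 1 ≤ t ∧ (∀ s : ℕ, s ≤ t → w.v (i - (s : ZMod (n+1))) = w.v i - (s : ℤ) • w.dir i) ∧
      w.turnAt (i - (t : ZMod (n+1))) ≠ 0 := by
  have hex : ∃ t : ℕ, w.dir (i - 1 - (t : ZMod (n+1))) ≠ w.dir i := by
    by_contra hc
    push_neg at hc
    refine w.not_forall_dir (w.dir i) (fun j => ?_)
    have h := hc ((i - 1 - j).val)
    rwa [show i - 1 - (((i - 1 - j).val : ℕ) : ZMod (n+1)) = j from by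
      simp [ZMod.natCast_val, ZMod.cast_id]] at h
  obtain ⟨t, hspec, hminraw⟩ :
      ∃ t : ℕ, w.dir (i - 1 - (t : ZMod (n+1))) ≠ w.dir i ∧
        ∀ s : ℕ, s < t → ¬ w.dir (i - 1 - (s : ZMod (n+1))) ≠ w.dir i :=
    ⟨Nat.find hex, Nat.find_spec hex, fun s hs => Nat.find_min hex hs⟩
  have hmin : ∀ s, s < t → w.dir (i - 1 - (s : ZMod (n+1))) = w.dir i :=
    fun s hs => not_not.mp (hminraw s hs)
  have ht1 : 1 ≤ t := by
    by_contra h0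
    have ht0 : t = 0 := by omega
    rw [ht0] at hspec
    simp [hstraight] at hspec
  have hvv : ∀ s : ℕ, s ≤ t → w.v (i - (s : ZMod (n+1))) = w.v i - (s : ℤ) • w.dir i := by
    intro s
    induction s with
    | zero => intro _; simp
    | succ s ih =>
      intro hs
      have hcast : ((s+1 : ℕ) : ZMod (n+1)) = (s : ZMod (n+1)) + 1 := by push_cast; ring
      have hdir : w.dir (i - ((s+1 : ℕ) : ZMod (n+1))) = w.dir i := by
        rw [show i - ((s+1 : ℕ) : ZMod (n+1)) = i - 1 - (s : ZMod (n+1)) from by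
          rw [hcast]; ring]
        exact hmin s (by omega)
      have hstep : w.v (i - (s : ZMod (n+1))) =
          w.v (i - ((s+1 : ℕ) : ZMod (n+1))) + w.dir (i - ((s+1 : ℕ) : ZMod (n+1))) := by
        rw [show i - (s : ZMod (n+1)) = (i - ((s+1 : ℕ) : ZMod (n+1))) + 1 from by
          rw [hcast]; ring]
        exact w.v_add_one _
      have := ih (by omega)
      rw [hdir] at hstep
      have : w.v (i - ((s+1 : ℕ) : ZMod (n+1))) = w.v (i - (s : ZMod (n+1))) - w.dir i := by
        rw [hstep]; ring
      rw [this, ih (by omega)]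
      push_cast
      rw [add_smul, one_smul]
      ring
  refine ⟨t, ht1, hvv, ?_⟩
  have hout : w.dir (i - (t : ZMod (n+1))) = w.dir i := by
    rw [show i - (t : ZMod (n+1)) = i - 1 - ((t - 1 : ℕ) : ZMod (n+1)) from by
      rw [show ((t : ℕ) : ZMod (n+1)) = ((t-1 : ℕ) : ZMod (n+1)) + 1 from by
        conv_lhs => rw [show t = (t-1) + 1 by omega]
        push_cast; ring]
      ring]
    exact hmin (t-1) (by omega)
  have hin : w.dir (i - (t : ZMod (n+1)) - 1) ≠ w.dir i := by
    rwa [show i - (t : ZMod (n+1)) - 1 = i - 1 - (t : ZMod (n+1)) from by ring]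
  unfold GridWalk.turnAt GridWalk.turnCost
  rw [hout, if_neg (fun hc => hin hc.symm)]
  split <;> simp

end GridWalk

section Helpers

variable {P : Set Pixel}

lemma turnsIn_pos (C : CycleCover P) (q : Pixel) (j : Fin C.k) (i : ZMod (C.len j + 1))
    (hv : (C.walk j).v i = q) (ht : (C.walk j).turnAt i ≠ 0) : 0 < C.turnsIn {q} := by
  have h1 : 0 < (C.walk j).turnsIn {q} := by
    have h2 : 0 < Set.indicator {q} (fun _ => (C.walk j).turnAt i) ((C.walk j).v i) := by
      rw [hv, Set.indicator_of_mem (Set.mem_singleton q)]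
      omega
    exact lt_of_lt_of_le h2 (Finset.single_le_sum
      (f := fun k => Set.indicator {q} (fun _ => (C.walk j).turnAt k) ((C.walk j).v k))
      (fun _ _ => Nat.zero_le _) (Finset.mem_univ i))
  exact lt_of_lt_of_le h1 (Finset.single_le_sum
    (f := fun j => (C.walk j).turnsIn {q}) (fun _ _ => Nat.zero_le _) (Finset.mem_univ j))

lemma turnAt_eq_zero (C : CycleCover P) (q : Pixel) (h : C.turnsIn {q} = 0)
    (j : Fin C.k) (i : ZMod (C.len j + 1)) (hv : (C.walk j).v i = q) :
    (C.walk j).turnAt i = 0 := by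
  by_contra hne
  have := turnsIn_pos C q j i hv hne
  omega

lemma hmem_right (p : Pixel) (t : ℕ)
    (hP : ∀ s : ℕ, s ≤ t → ((p.1 + (s:ℤ), p.2) : Pixel) ∈ P) :
    ((p.1 + (t:ℤ), p.2) : Pixel) ∈ hStrip P p := by
  refine ⟨rfl, fun x hx1 hx2 => ?_⟩
  simp only [min_def, max_def] at hx1 hx2
  have hb : p.1 ≤ x ∧ x ≤ p.1 + (t:ℤ) := by
    constructor <;> [skip; skip] <;> split_ifs at hx1 hx2 <;> omega
  have := hP (x - p.1).toNat (by omega)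
  rwa [show p.1 + ((x - p.1).toNat : ℤ) = x by omega] at this

lemma hmem_left (p : Pixel) (t : ℕ)
    (hP : ∀ s : ℕ, s ≤ t → ((p.1 - (s:ℤ), p.2) : Pixel) ∈ P) :
    ((p.1 - (t:ℤ), p.2) : Pixel) ∈ hStrip P p := by
  refine ⟨rfl, fun x hx1 hx2 => ?_⟩
  simp only [min_def, max_def] at hx1 hx2
  have hb : p.1 - (t:ℤ) ≤ x ∧ x ≤ p.1 := by
    constructor <;> [skip; skip] <;> split_ifs at hx1 hx2 <;> omega
  have := hP (p.1 - x).toNat (by omega)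
  rwa [show p.1 - ((p.1 - x).toNat : ℤ) = x by omega] at this

lemma vmem_up (p : Pixel) (t : ℕ)
    (hP : ∀ s : ℕ, s ≤ t → ((p.1, p.2 + (s:ℤ)) : Pixel) ∈ P) :
    ((p.1, p.2 + (t:ℤ)) : Pixel) ∈ vStrip P p := by
  refine ⟨rfl, fun y hy1 hy2 => ?_⟩
  simp only [min_def, max_def] at hy1 hy2
  have hb : p.2 ≤ y ∧ y ≤ p.2 + (t:ℤ) := by
    constructor <;> [skip; skip] <;> split_ifs at hy1 hy2 <;> omega
  have := hP (y - p.2).toNat (by omega)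
  rwa [show p.2 + ((y - p.2).toNat : ℤ) = y by omega] at this

lemma vmem_down (p : Pixel) (t : ℕ)
    (hP : ∀ s : ℕ, s ≤ t → ((p.1, p.2 - (s:ℤ)) : Pixel) ∈ P) :
    ((p.1, p.2 - (t:ℤ)) : Pixel) ∈ vStrip P p := by
  refine ⟨rfl, fun y hy1 hy2 => ?_⟩
  simp only [min_def, max_def] at hy1 hy2
  have hb : p.2 - (t:ℤ) ≤ y ∧ y ≤ p.2 := by
    constructor <;> [skip; skip] <;> split_ifs at hy1 hy2 <;> omega
  have := hP (p.2 - y).toNat (by omega)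
  rwa [show p.2 - ((p.2 - y).toNat : ℤ) = y by omega] at this

end Helpers

/-- if a cycle cover makes no turn at a pixel `p`, then it makes a turn strictly
to the left and strictly to the right of `p` on the horizontal full strip through `p`, or a
turn strictly below and strictly above `p` on the vertical full strip through `p`. -/
theorem no_turn_guard (P : Set Pixel) (p : Pixel) (hp : p ∈ P) (C : CycleCover P)
    (h : C.turnsIn {p} = 0) :
    ((∃ q ∈ hStrip P p, q.1 < p.1 ∧ 0 < C.turnsIn {q}) ∧
      (∃ q ∈ hStrip P p, p.1 < q.1 ∧ 0 < C.turnsIn {q})) ∨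
    ((∃ q ∈ vStrip P p, q.2 < p.2 ∧ 0 < C.turnsIn {q}) ∧
      (∃ q ∈ vStrip P p, p.2 < q.2 ∧ 0 < C.turnsIn {q})) := by
  obtain ⟨j, i, hv⟩ := C.covers p hp
  have h0 : (C.walk j).turnAt i = 0 := turnAt_eq_zero C p h j i hv
  have hstraight : (C.walk j).dir (i - 1) = (C.walk j).dir i := by
    unfold GridWalk.turnAt GridWalk.turnCost at h0
    split_ifs at h0 with h1 h2
    · exact h1.symm
  obtain ⟨t, ht1, hvf, htf⟩ := (C.walk j).exists_forward_turn i
  obtain ⟨t', ht1', hvb, htb⟩ := (C.walk j).exists_backward_turn i hstraight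
  have hd : IsUnitStep ((C.walk j).dir i) := (C.walk j).step i
  rcases hd with hdd|hdd|hdd|hdd
  · left
    have hf : ∀ s : ℕ, s ≤ t →
        (C.walk j).v (i + (s : ZMod (C.len j + 1))) = ((p.1 + (s:ℤ), p.2) : Pixel) := by
      intro s hs; rw [hvf s hs, hv, hdd]; apply Prod.ext <;> simp <;> ring
    have hb : ∀ s : ℕ, s ≤ t' →
        (C.walk j).v (i - (s : ZMod (C.len j + 1))) = ((p.1 - (s:ℤ), p.2) : Pixel) := by
      intro s hs; rw [hvb s hs, hv, hdd]; apply Prod.ext <;> simp <;> ring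
    refine ⟨⟨(p.1 - (t':ℤ), p.2), hmem_left p t' (fun s hs => by
        rw [← hb s hs]; exact C.mem j _), by simp; omega,
        turnsIn_pos C _ j (i - (t' : ZMod (C.len j + 1))) (hb t' le_rfl) htb⟩,
      ⟨(p.1 + (t:ℤ), p.2), hmem_right p t (fun s hs => by
        rw [← hf s hs]; exact C.mem j _), by simp; omega,
        turnsIn_pos C _ j (i + (t : ZMod (C.len j + 1))) (hf t le_rfl) htf⟩⟩
  · left
    have hf : ∀ s : ℕ, s ≤ t →
        (C.walk j).v (i + (s : ZMod (C.len j + 1))) = ((p.1 - (s:ℤ), p.2) : Pixel) := by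
      intro s hs; rw [hvf s hs, hv, hdd]; apply Prod.ext <;> simp <;> ring
    have hb : ∀ s : ℕ, s ≤ t' →
        (C.walk j).v (i - (s : ZMod (C.len j + 1))) = ((p.1 + (s:ℤ), p.2) : Pixel) := by
      intro s hs; rw [hvb s hs, hv, hdd]; apply Prod.ext <;> simp <;> ring
    refine ⟨⟨(p.1 - (t:ℤ), p.2), hmem_left p t (fun s hs => by
        rw [← hf s hs]; exact C.mem j _), by simp; omega,
        turnsIn_pos C _ j (i + (t : ZMod (C.len j + 1))) (hf t le_rfl) htf⟩,
      ⟨(p.1 + (t':ℤ), p.2), hmem_right p t' (fun s hs => by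
        rw [← hb s hs]; exact C.mem j _), by simp; omega,
        turnsIn_pos C _ j (i - (t' : ZMod (C.len j + 1))) (hb t' le_rfl) htb⟩⟩
  · right
    have hf : ∀ s : ℕ, s ≤ t →
        (C.walk j).v (i + (s : ZMod (C.len j + 1))) = ((p.1, p.2 + (s:ℤ)) : Pixel) := by
      intro s hs; rw [hvf s hs, hv, hdd]; apply Prod.ext <;> simp <;> ring
    have hb : ∀ s : ℕ, s ≤ t' →
        (C.walk j).v (i - (s : ZMod (C.len j + 1))) = ((p.1, p.2 - (s:ℤ)) : Pixel) := by
      intro s hs; rw [hvb s hs, hv, hdd]; apply Prod.ext <;> simp <;> ring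
    refine ⟨⟨(p.1, p.2 - (t':ℤ)), vmem_down p t' (fun s hs => by
        rw [← hb s hs]; exact C.mem j _), by simp; omega,
        turnsIn_pos C _ j (i - (t' : ZMod (C.len j + 1))) (hb t' le_rfl) htb⟩,
      ⟨(p.1, p.2 + (t:ℤ)), vmem_up p t (fun s hs => by
        rw [← hf s hs]; exact C.mem j _), by simp; omega,
        turnsIn_pos C _ j (i + (t : ZMod (C.len j + 1))) (hf t le_rfl) htf⟩⟩
  · right
    have hf : ∀ s : ℕ, s ≤ t →
        (C.walk j).v (i + (s : ZMod (C.len j + 1))) = ((p.1, p.2 - (s:ℤ)) : Pixel) := by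
      intro s hs; rw [hvf s hs, hv, hdd]; apply Prod.ext <;> simp <;> ring
    have hb : ∀ s : ℕ, s ≤ t' →
        (C.walk j).v (i - (s : ZMod (C.len j + 1))) = ((p.1, p.2 + (s:ℤ)) : Pixel) := by
      intro s hs; rw [hvb s hs, hv, hdd]; apply Prod.ext <;> simp <;> ring
    refine ⟨⟨(p.1, p.2 - (t:ℤ)), vmem_down p t (fun s hs => by
        rw [← hf s hs]; exact C.mem j _), by simp; omega,
        turnsIn_pos C _ j (i + (t : ZMod (C.len j + 1))) (hf t le_rfl) htf⟩,
      ⟨(p.1, p.2 + (t':ℤ)), vmem_up p t' (fun s hs => by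
        rw [← hb s hs]; exact C.mem j _), by simp; omega,
        turnsIn_pos C _ j (i - (t' : ZMod (C.len j + 1))) (hb t' le_rfl) htb⟩⟩
end

section
/- Let p be a pixel of a grid graph and C a cycle cover. If some walk of C makes a turn at p, then the union of the horizontal and the vertical full strips through p contains at least three turns (counting multiplicity, with U-turns counting twice). -/
lemma no_close (d d' : Pixel) (hd : IsUnitStep d) (hd' : IsUnitStep d') (h1 : d' ≠ d) (h2 : d' ≠ -d)
    (k m : ℕ) (hk : 1 ≤ k) (hm : 1 ≤ m) (e1 : -((k:ℤ) * d.1) = (m:ℤ)*d'.1)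
    (e2 : -((k:ℤ)*d.2) = (m:ℤ)*d'.2) : False := by
  rcases hd with rfl|rfl|rfl|rfl <;> rcases hd' with rfl|rfl|rfl|rfl <;>
    simp_all [Prod.ext_iff] <;> omega

lemma unit_mul_ne (d : Pixel) (hd : IsUnitStep d) (k : ℕ) (hk : 1 ≤ k)
    (e1 : (k:ℤ) * d.1 = 0) (e2 : (k:ℤ)*d.2 = 0) : False := by
  rcases hd with rfl|rfl|rfl|rfl <;> simp_all <;> omega

lemma mem_hStrip_right {P : Set Pixel} {p : Pixel} (k : ℕ)
    (h : ∀ s : ℕ, s ≤ k → ((p.1 + s, p.2) : Pixel) ∈ P) :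
    ((p.1 + k, p.2) : Pixel) ∈ hStrip P p := by
  refine ⟨rfl, fun x h1 h2 => ?_⟩
  have h1' : min p.1 (p.1 + (k:ℤ)) ≤ x := h1
  have h2' : x ≤ max p.1 (p.1 + (k:ℤ)) := h2
  obtain ⟨s, hsk, hsx⟩ : ∃ s : ℕ, s ≤ k ∧ (s:ℤ) = x - p.1 :=
    ⟨(x - p.1).toNat, by omega, by omega⟩
  have := h s hsk
  rwa [show p.1 + (s:ℤ) = x by omega] at this

lemma mem_hStrip_left {P : Set Pixel} {p : Pixel} (k : ℕ)
    (h : ∀ s : ℕ, s ≤ k → ((p.1 - s, p.2) : Pixel) ∈ P) :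
    ((p.1 - k, p.2) : Pixel) ∈ hStrip P p := by
  refine ⟨rfl, fun x h1 h2 => ?_⟩
  have h1' : min p.1 (p.1 - (k:ℤ)) ≤ x := h1
  have h2' : x ≤ max p.1 (p.1 - (k:ℤ)) := h2
  obtain ⟨s, hsk, hsx⟩ : ∃ s : ℕ, s ≤ k ∧ (s:ℤ) = p.1 - x :=
    ⟨(p.1 - x).toNat, by omega, by omega⟩
  have := h s hsk
  rwa [show p.1 - (s:ℤ) = x by omega] at this

lemma mem_vStrip_up {P : Set Pixel} {p : Pixel} (k : ℕ)
    (h : ∀ s : ℕ, s ≤ k → ((p.1, p.2 + s) : Pixel) ∈ P) :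
    ((p.1, p.2 + k) : Pixel) ∈ vStrip P p := by
  refine ⟨rfl, fun y h1 h2 => ?_⟩
  have h1' : min p.2 (p.2 + (k:ℤ)) ≤ y := h1
  have h2' : y ≤ max p.2 (p.2 + (k:ℤ)) := h2
  obtain ⟨s, hsk, hsy⟩ : ∃ s : ℕ, s ≤ k ∧ (s:ℤ) = y - p.2 :=
    ⟨(y - p.2).toNat, by omega, by omega⟩
  have := h s hsk
  rwa [show p.2 + (s:ℤ) = y by omega] at this

lemma mem_vStrip_down {P : Set Pixel} {p : Pixel} (k : ℕ)
    (h : ∀ s : ℕ, s ≤ k → ((p.1, p.2 - s) : Pixel) ∈ P) :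
    ((p.1, p.2 - k) : Pixel) ∈ vStrip P p := by
  refine ⟨rfl, fun y h1 h2 => ?_⟩
  have h1' : min p.2 (p.2 - (k:ℤ)) ≤ y := h1
  have h2' : y ≤ max p.2 (p.2 - (k:ℤ)) := h2
  obtain ⟨s, hsk, hsy⟩ : ∃ s : ℕ, s ≤ k ∧ (s:ℤ) = p.2 - y :=
    ⟨(p.2 - y).toNat, by omega, by omega⟩
  have := h s hsk
  rwa [show p.2 - (s:ℤ) = y by omega] at this

lemma seg_mem_back {P : Set Pixel} {p d : Pixel} (hd : IsUnitStep d) (k : ℕ)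
    (h : ∀ s : ℕ, s ≤ k → ((p.1 - s * d.1, p.2 - s * d.2) : Pixel) ∈ P) :
    ((p.1 - k * d.1, p.2 - k * d.2) : Pixel) ∈ hStrip P p ∪ vStrip P p := by
  rcases hd with rfl|rfl|rfl|rfl
  · refine Or.inl ?_
    have := mem_hStrip_left (P:=P) (p:=p) k (fun s hs => by simpa using h s hs)
    simpa using this
  · refine Or.inl ?_
    have := mem_hStrip_right (P:=P) (p:=p) k
      (fun s hs => by simpa [mul_neg, sub_neg_eq_add] using h s hs)
    simpa [mul_neg, sub_neg_eq_add] using this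
  · refine Or.inr ?_
    have := mem_vStrip_down (P:=P) (p:=p) k (fun s hs => by simpa using h s hs)
    simpa using this
  · refine Or.inr ?_
    have := mem_vStrip_up (P:=P) (p:=p) k
      (fun s hs => by simpa [mul_neg, sub_neg_eq_add] using h s hs)
    simpa [mul_neg, sub_neg_eq_add] using this

lemma seg_mem_fwd {P : Set Pixel} {p d : Pixel} (hd : IsUnitStep d) (k : ℕ)
    (h : ∀ s : ℕ, s ≤ k → ((p.1 + s * d.1, p.2 + s * d.2) : Pixel) ∈ P) :
    ((p.1 + k * d.1, p.2 + k * d.2) : Pixel) ∈ hStrip P p ∪ vStrip P p := by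
  rcases hd with rfl|rfl|rfl|rfl
  · refine Or.inl ?_
    have := mem_hStrip_right (P:=P) (p:=p) k (fun s hs => by simpa using h s hs)
    simpa using this
  · refine Or.inl ?_
    have := mem_hStrip_left (P:=P) (p:=p) k
      (fun s hs => by simpa [mul_neg, ← sub_eq_add_neg] using h s hs)
    simpa [mul_neg, ← sub_eq_add_neg] using this
  · refine Or.inr ?_
    have := mem_vStrip_up (P:=P) (p:=p) k (fun s hs => by simpa using h s hs)
    simpa using this
  · refine Or.inr ?_
    have := mem_vStrip_down (P:=P) (p:=p) k
      (fun s hs => by simpa [mul_neg, ← sub_eq_add_neg] using h s hs)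
    simpa [mul_neg, ← sub_eq_add_neg] using this

lemma turnCost_pos {din dout : Pixel} (h : dout ≠ din) : 1 ≤ GridWalk.turnCost din dout := by
  unfold GridWalk.turnCost
  rw [if_neg h]
  split <;> omega

lemma sum_dir {n : ℕ} (w : GridWalk n) : ∑ j, w.dir j = 0 := by
  unfold GridWalk.dir
  rw [Finset.sum_sub_distrib]
  have : ∑ x : ZMod (n+1), w.v (x + 1) = ∑ x : ZMod (n+1), w.v x :=
    Fintype.sum_equiv (Equiv.addRight (1 : ZMod (n+1))) _ _ (fun x => rfl)
  rw [this, sub_self]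

lemma not_all_dir {n : ℕ} (w : GridWalk n) (d : Pixel) (hall : ∀ j, w.dir j = d) : False := by
  have h0 := sum_dir w
  rw [Finset.sum_congr rfl (fun j _ => hall j), Finset.sum_const] at h0
  have hd : IsUnitStep d := by rw [← hall 0]; exact w.step 0
  have hcard : (Finset.univ : Finset (ZMod (n+1))).card = n + 1 := by
    simp [ZMod.card]
  rw [hcard] at h0
  rcases hd with rfl|rfl|rfl|rfl <;> simp [Prod.ext_iff] at h0 <;> omega

lemma core {n : ℕ} {P : Set Pixel} (w : GridWalk n) (hmem : ∀ i, w.v i ∈ P)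
    (i : ZMod (n+1)) (p : Pixel) (hvi : w.v i = p) (hturn : 0 < w.turnAt i) :
    3 ≤ w.turnsIn (hStrip P p ∪ vStrip P p) := by
  classical
  obtain ⟨d, hd_def⟩ : ∃ d, w.dir (i-1) = d := ⟨_, rfl⟩
  obtain ⟨d', hd'_def⟩ : ∃ d', w.dir i = d' := ⟨_, rfl⟩
  have hdu : IsUnitStep d := by rw [← hd_def]; exact w.step (i-1)
  have hdu' : IsUnitStep d' := by rw [← hd'_def]; exact w.step i
  have hta : w.turnAt i = GridWalk.turnCost d d' := by
    unfold GridWalk.turnAt; rw [hd_def, hd'_def]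
  have hne : d' ≠ d := by
    intro hdd
    rw [hta] at hturn
    simp [GridWalk.turnCost, hdd] at hturn
  have hpP : p ∈ P := hvi ▸ hmem i
  have hpS : p ∈ hStrip P p ∪ vStrip P p := by
    refine Or.inl ⟨rfl, fun x h1 h2 => ?_⟩
    have hx : x = p.1 := le_antisymm (by simpa using h2) (by simpa using h1)
    rw [hx]
    simpa using hpP
  -- backward run
  have hexb : ∃ s : ℕ, w.dir (i - 1 - (s:ℕ)) ≠ d := by
    by_contra hno
    push_neg at hno
    refine not_all_dir w d (fun j => ?_)
    have := hno ((i - 1 - j).val)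
    rwa [ZMod.natCast_rightInverse _, show i - 1 - (i - 1 - j) = j by ring] at this
  set k := Nat.find hexb with hk_def
  have hkspec : w.dir (i - 1 - (k:ℕ)) ≠ d := Nat.find_spec hexb
  have hkmin : ∀ s, s < k → w.dir (i - 1 - (s:ℕ)) = d := fun s hs =>
    not_not.mp (Nat.find_min hexb hs)
  have hk1 : 1 ≤ k := by
    rcases Nat.eq_zero_or_pos k with h0 | h1
    · exfalso
      apply hkspec
      rw [h0]
      simpa using hd_def
    · exact h1
  obtain ⟨k', hk'⟩ : ∃ k', k = k' + 1 := ⟨k - 1, by omega⟩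
  have hback : ∀ s : ℕ, s ≤ k → w.v (i - 1 - (s:ℕ) + 1) =
      ((p.1 - s * d.1, p.2 - s * d.2) : Pixel) := by
    intro s
    induction s with
    | zero =>
      intro _
      rw [show i - 1 - ((0:ℕ):ZMod (n+1)) + 1 = i by push_cast; ring, hvi]
      simp [Prod.ext_iff]
    | succ s ih =>
      intro hsk
      have hds : w.dir (i - 1 - (s:ℕ)) = d := hkmin s (by omega)
      have hvprev := ih (by omega)
      have hstep : w.v (i - 1 - (s:ℕ) + 1) - w.v (i - 1 - (s:ℕ)) = d := hds
      have hidx : i - 1 - ((s+1:ℕ):ZMod (n+1)) + 1 = i - 1 - (s:ℕ) := by push_cast; ring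
      rw [hidx, show w.v (i - 1 - (s:ℕ)) = w.v (i - 1 - (s:ℕ) + 1) - d by
        rw [← hstep]; abel, hvprev]
      rw [Prod.ext_iff]
      constructor
      · show p.1 - (s:ℤ) * d.1 - d.1 = p.1 - ((s+1:ℕ):ℤ) * d.1
        push_cast; ring
      · show p.2 - (s:ℤ) * d.2 - d.2 = p.2 - ((s+1:ℕ):ℤ) * d.2
        push_cast; ring
  have hvj1 : w.v (i - 1 - (k:ℕ) + 1) = ((p.1 - k * d.1, p.2 - k * d.2) : Pixel) :=
    hback k le_rfl
  have hdirj1 : w.dir (i - 1 - (k:ℕ) + 1) = d := by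
    rw [show i - 1 - (k:ℕ) + 1 = i - 1 - (k':ℕ) by rw [hk']; push_cast; ring]
    exact hkmin k' (by omega)
  have htj1 : 1 ≤ w.turnAt (i - 1 - (k:ℕ) + 1) := by
    unfold GridWalk.turnAt
    rw [show i - 1 - (k:ℕ) + 1 - 1 = i - 1 - (k:ℕ) by ring, hdirj1]
    exact turnCost_pos (Ne.symm hkspec)
  have hj1S : w.v (i - 1 - (k:ℕ) + 1) ∈ hStrip P p ∪ vStrip P p := by
    rw [hvj1]
    exact seg_mem_back hdu k (fun s hs => by rw [← hback s hs]; exact hmem _)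
  have hj1i : i - 1 - (k:ℕ) + 1 ≠ i := by
    intro he
    have h' := hvj1
    rw [he, hvi] at h'
    have h1 : p.1 = p.1 - (k:ℤ) * d.1 := congrArg Prod.fst h'
    have h2 : p.2 = p.2 - (k:ℤ) * d.2 := congrArg Prod.snd h'
    exact unit_mul_ne d hdu k hk1 (by linarith) (by linarith)
  set F := fun x : ZMod (n+1) =>
    (hStrip P p ∪ vStrip P p).indicator (fun _ : Pixel => w.turnAt x) (w.v x) with hF
  have hturnsIn : w.turnsIn (hStrip P p ∪ vStrip P p) = ∑ x, F x := rfl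
  have hFj1 : 1 ≤ F (i - 1 - (k:ℕ) + 1) := by
    rw [hF]
    simp only
    rw [Set.indicator_of_mem hj1S]
    exact htj1
  by_cases hU : d' = -d
  · -- U-turn at p
    have h2 : w.turnAt i = 2 := by
      rw [hta]; unfold GridWalk.turnCost; rw [if_neg hne, if_pos hU]
    have hFi : F i = 2 := by
      rw [hF]; simp only
      rw [hvi, Set.indicator_of_mem hpS]
      exact h2
    have hle : F i + F (i - 1 - (k:ℕ) + 1) ≤ ∑ x, F x := by
      rw [← Finset.sum_pair (Ne.symm hj1i)]
      exact Finset.sum_le_sum_of_subset (Finset.subset_univ _)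
    rw [hturnsIn]
    omega
  · -- 90 degree turn at p: forward run
    have hti1 : 1 ≤ w.turnAt i := hturn
    have hexf : ∃ t : ℕ, w.dir (i + (t:ℕ)) ≠ d' := by
      by_contra hno
      push_neg at hno
      refine not_all_dir w d' (fun j => ?_)
      have := hno ((j - i).val)
      rwa [ZMod.natCast_rightInverse _, show i + (j - i) = j by ring] at this
    set m := Nat.find hexf with hm_def
    have hmspec : w.dir (i + (m:ℕ)) ≠ d' := Nat.find_spec hexf
    have hmmin : ∀ t, t < m → w.dir (i + (t:ℕ)) = d' := fun t ht =>
      not_not.mp (Nat.find_min hexf ht)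
    have hm1 : 1 ≤ m := by
      rcases Nat.eq_zero_or_pos m with h0 | h1
      · exfalso
        apply hmspec
        rw [h0]
        simpa using hd'_def
      · exact h1
    obtain ⟨m', hm'⟩ : ∃ m', m = m' + 1 := ⟨m - 1, by omega⟩
    have hfwd : ∀ t : ℕ, t ≤ m → w.v (i + (t:ℕ)) =
        ((p.1 + t * d'.1, p.2 + t * d'.2) : Pixel) := by
      intro t
      induction t with
      | zero =>
        intro _
        rw [show i + ((0:ℕ):ZMod (n+1)) = i by push_cast; ring, hvi]
        simp [Prod.ext_iff]
      | succ t ih =>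
        intro htm
        have hdt : w.dir (i + (t:ℕ)) = d' := hmmin t (by omega)
        have hvprev := ih (by omega)
        have hstep : w.v (i + (t:ℕ) + 1) - w.v (i + (t:ℕ)) = d' := hdt
        have hidx : i + ((t+1:ℕ):ZMod (n+1)) = i + (t:ℕ) + 1 := by push_cast; ring
        rw [hidx, show w.v (i + (t:ℕ) + 1) = w.v (i + (t:ℕ)) + d' by
          rw [← hstep]; abel, hvprev]
        rw [Prod.ext_iff]
        constructor
        · show p.1 + (t:ℤ) * d'.1 + d'.1 = p.1 + ((t+1:ℕ):ℤ) * d'.1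
          push_cast; ring
        · show p.2 + (t:ℤ) * d'.2 + d'.2 = p.2 + ((t+1:ℕ):ℤ) * d'.2
          push_cast; ring
    have hvj2 : w.v (i + (m:ℕ)) = ((p.1 + m * d'.1, p.2 + m * d'.2) : Pixel) :=
      hfwd m le_rfl
    have hdirj2 : w.dir (i + (m:ℕ) - 1) = d' := by
      rw [show i + (m:ℕ) - 1 = i + (m':ℕ) by rw [hm']; push_cast; ring]
      exact hmmin m' (by omega)
    have htj2 : 1 ≤ w.turnAt (i + (m:ℕ)) := by
      unfold GridWalk.turnAt
      rw [hdirj2]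
      exact turnCost_pos hmspec
    have hj2S : w.v (i + (m:ℕ)) ∈ hStrip P p ∪ vStrip P p := by
      rw [hvj2]
      exact seg_mem_fwd hdu' m (fun t ht => by rw [← hfwd t ht]; exact hmem _)
    have hj2i : i + (m:ℕ) ≠ i := by
      intro he
      have h' := hvj2
      rw [he, hvi] at h'
      have h1 : p.1 = p.1 + (m:ℤ) * d'.1 := congrArg Prod.fst h'
      have h2 : p.2 = p.2 + (m:ℤ) * d'.2 := congrArg Prod.snd h'
      exact unit_mul_ne d' hdu' m hm1 (by linarith) (by linarith)
    have hj1j2 : i - 1 - (k:ℕ) + 1 ≠ i + (m:ℕ) := by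
      intro he
      have h' := hvj1
      rw [he, hvj2] at h'
      have h1 : p.1 + (m:ℤ) * d'.1 = p.1 - (k:ℤ) * d.1 := congrArg Prod.fst h'
      have h2 : p.2 + (m:ℤ) * d'.2 = p.2 - (k:ℤ) * d.2 := congrArg Prod.snd h'
      exact no_close d d' hdu hdu' hne hU k m hk1 hm1 (by linarith) (by linarith)
    have hFi : 1 ≤ F i := by
      rw [hF]; simp only
      rw [hvi, Set.indicator_of_mem hpS]
      exact hti1
    have hFj2 : 1 ≤ F (i + (m:ℕ)) := by
      rw [hF]; simp only
      rw [Set.indicator_of_mem hj2S]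
      exact htj2
    have hle : F i + F (i - 1 - (k:ℕ) + 1) + F (i + (m:ℕ)) ≤ ∑ x, F x := by
      have heq : F i + F (i - 1 - (k:ℕ) + 1) + F (i + (m:ℕ)) =
          ∑ x ∈ ({i, i - 1 - (k:ℕ) + 1, i + (m:ℕ)} : Finset (ZMod (n+1))), F x := by
        rw [Finset.sum_insert (by simp [Ne.symm hj1i, Ne.symm hj2i]),
          Finset.sum_pair hj1j2]
        ring
      rw [heq]
      exact Finset.sum_le_sum_of_subset (Finset.subset_univ _)
    rw [hturnsIn]
    omega

/-- if a cycle cover makes a turn at a pixel `p`, then the union of the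
horizontal and vertical full strips through `p` contains at least three turns
(with multiplicity, U-turns counting twice). -/
theorem turn_guard (P : Set Pixel) (p : Pixel) (hp : p ∈ P) (C : CycleCover P)
    (h : 0 < C.turnsIn {p}) :
    3 ≤ C.turnsIn (hStrip P p ∪ vStrip P p) := by
  obtain ⟨j, hj⟩ : ∃ j, 0 < (C.walk j).turnsIn {p} := by
    by_contra hno
    push_neg at hno
    have hz : C.turnsIn {p} = 0 := by
      unfold CycleCover.turnsIn
      exact Finset.sum_eq_zero (fun j _ => Nat.le_zero.mp (hno j))
    omega
  have hj' : (GridWalk.turnsIn (C.walk j) {p}) ≠ 0 := hj.ne'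
  unfold GridWalk.turnsIn at hj'
  obtain ⟨i, -, hi⟩ := Finset.exists_ne_zero_of_sum_ne_zero hj'
  have hmem : (C.walk j).v i ∈ ({p} : Set Pixel) := by
    by_contra hc
    rw [Set.indicator_of_notMem hc] at hi
    exact hi rfl
  have hvp : (C.walk j).v i = p := hmem
  have hpos : 0 < (C.walk j).turnAt i := by
    rw [Set.indicator_of_mem hmem] at hi
    omega
  have hcore := core (C.walk j) (C.mem j) i p hvp hpos
  refine le_trans hcore ?_
  unfold CycleCover.turnsIn
  exact Finset.single_le_sum (f := fun j => (C.walk j).turnsIn (hStrip P p ∪ vStrip P p))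
    (fun j _ => Nat.zero_le _) (Finset.mem_univ j)
end

section
/- Every closed walk in a 2-dimensional grid graph that visits at least two distinct pixels makes at least four 90°-turns (where a U-turn counts as two 90°-turns). -/
section Aux

/-- Backward cyclic propagation in `ZMod (m+1)`. -/
lemma cycProp {m : ℕ} (Q : ZMod (m+1) → Prop) (h : ∀ i, Q i → Q (i - 1))
    {a : ZMod (m+1)} (ha : Q a) (j : ZMod (m+1)) : Q j := by
  have key : ∀ k : ℕ, Q (a - (k : ZMod (m+1))) := by
    intro k
    induction k with
    | zero => simpa using ha
    | succ k ih =>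
      have hk := h _ ih
      have e : a - ((k+1 : ℕ) : ZMod (m+1)) = a - (k : ZMod (m+1)) - 1 := by
        push_cast; ring
      rw [e]; exact hk
  have hj : a - (((a - j).val : ℕ) : ZMod (m+1)) = j := by
    rw [ZMod.natCast_rightInverse (a - j)]; ring
  rw [← hj]; exact key _

/-- Forward cyclic propagation in `ZMod (m+1)`. -/
lemma cycProp' {m : ℕ} (Q : ZMod (m+1) → Prop) (h : ∀ i, Q i → Q (i + 1))
    {a : ZMod (m+1)} (ha : Q a) (j : ZMod (m+1)) : Q j := by
  have := cycProp (fun i => Q (-i)) (fun i hi => by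
    have hq := h _ hi
    show Q (-(i - 1))
    have e : -(i - 1) = -i + 1 := by ring
    rw [e]; exact hq) (a := -a) (by simpa using ha) (-j)
  simpa using this

end Aux

namespace GridWalk

variable {n : ℕ}

lemma dir_unit' (w : GridWalk n) (i : ZMod (n+1)) : IsUnitStep (w.dir i) := w.step i

lemma sum_dir' (w : GridWalk n) : ∑ i, w.dir i = 0 := by
  have h1 : ∑ i : ZMod (n+1), w.v (i + 1) = ∑ i : ZMod (n+1), w.v i :=
    Fintype.sum_equiv (Equiv.addRight 1) _ _ (fun i => rfl)
  simp only [dir, Finset.sum_sub_distrib, h1, sub_self]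

/-- Pointwise bound: the turn cost dominates the sum of the four crossing indicators. -/
lemma cost_bound' (c : Pixel → ℤ) (hc : c = Prod.fst ∨ c = Prod.snd)
    (d e : Pixel) (hd : IsUnitStep d) (he : IsUnitStep e) :
    ((if c d ≤ 0 ∧ c e = 1 then 1 else 0) + (if c d = 1 ∧ c e ≤ 0 then 1 else 0)
      + (if c d = -1 ∧ 0 ≤ c e then 1 else 0) + (if 0 ≤ c d ∧ c e = -1 then 1 else 0) : ℕ)
      ≤ turnCost d e := by
  rcases hc with rfl | rfl <;>
    rcases hd with rfl | rfl | rfl | rfl <;>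
    rcases he with rfl | rfl | rfl | rfl <;>
      simp [turnCost, Prod.ext_iff]

lemma main_bound (w : GridWalk n) (c : Pixel → ℤ) (hc : c = Prod.fst ∨ c = Prod.snd)
    (a b : ZMod (n+1)) (ha : c (w.dir a) = 1) (hb : c (w.dir b) = -1) :
    4 ≤ w.turns := by
  set f : ZMod (n+1) → ℤ := fun i => c (w.dir i) with hf
  have ha' : f a = 1 := ha
  have hb' : f b = -1 := hb
  have vals : ∀ i, f i = 1 ∨ f i = 0 ∨ f i = -1 := by
    intro i
    rcases hc with rfl | rfl <;> rcases w.dir_unit' i with h | h | h | h <;>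
      simp [hf, h]
  have hU1 : ∃ i, f (i-1) ≤ 0 ∧ f i = 1 := by
    by_contra hcon
    push_neg at hcon
    have prop : ∀ i, f i = 1 → f (i - 1) = 1 := by
      intro i hi
      have h1 := hcon i
      have h2 := vals (i-1)
      omega
    have hcb : f b = 1 := cycProp (fun i => f i = 1) prop ha b
    omega
  have hD1 : ∃ i, f (i-1) = 1 ∧ f i ≤ 0 := by
    by_contra hcon
    push_neg at hcon
    have prop : ∀ i, f i = 1 → f (i + 1) = 1 := by
      intro i hi
      have h1 := hcon (i+1)
      have h2 := vals (i+1)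
      simp only [add_sub_cancel_right] at h1
      omega
    have hcb : f b = 1 := cycProp' (fun i => f i = 1) prop ha b
    omega
  have hU2 : ∃ i, f (i-1) = -1 ∧ 0 ≤ f i := by
    by_contra hcon
    push_neg at hcon
    have prop : ∀ i, f i = -1 → f (i + 1) = -1 := by
      intro i hi
      have h1 := hcon (i+1)
      have h2 := vals (i+1)
      simp only [add_sub_cancel_right] at h1
      omega
    have hca : f a = -1 := cycProp' (fun i => f i = -1) prop hb a
    omega
  have hD2 : ∃ i, 0 ≤ f (i-1) ∧ f i = -1 := by
    by_contra hcon
    push_neg at hcon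
    have prop : ∀ i, f i = -1 → f (i - 1) = -1 := by
      intro i hi
      have h1 := hcon i
      have h2 := vals (i-1)
      omega
    have hca : f a = -1 := cycProp (fun i => f i = -1) prop hb a
    omega
  -- now the counting
  have pointwise : ∀ i : ZMod (n+1),
      ((if f (i-1) ≤ 0 ∧ f i = 1 then 1 else 0) + (if f (i-1) = 1 ∧ f i ≤ 0 then 1 else 0)
        + (if f (i-1) = -1 ∧ 0 ≤ f i then 1 else 0) + (if 0 ≤ f (i-1) ∧ f i = -1 then 1 else 0) : ℕ)
        ≤ w.turnAt i := by
    intro i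
    exact cost_bound' c hc _ _ (w.dir_unit' (i-1)) (w.dir_unit' i)
  have hsum : ∑ i : ZMod (n+1),
      ((if f (i-1) ≤ 0 ∧ f i = 1 then 1 else 0) + (if f (i-1) = 1 ∧ f i ≤ 0 then 1 else 0)
        + (if f (i-1) = -1 ∧ 0 ≤ f i then 1 else 0) + (if 0 ≤ f (i-1) ∧ f i = -1 then 1 else 0) : ℕ)
        ≤ w.turns := Finset.sum_le_sum (fun i _ => pointwise i)
  refine le_trans ?_ hsum
  rw [Finset.sum_add_distrib, Finset.sum_add_distrib, Finset.sum_add_distrib]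
  have one_le : ∀ (P : ZMod (n+1) → Prop) [DecidablePred P], (∃ i, P i) →
      1 ≤ ∑ i : ZMod (n+1), (if P i then 1 else 0 : ℕ) := by
    intro P _ hP
    obtain ⟨i, hi⟩ := hP
    refine le_trans ?_ (Finset.single_le_sum (f := fun j => if P j then (1:ℕ) else 0)
      (fun j _ => Nat.zero_le _) (Finset.mem_univ i))
    simp [hi]
  obtain ⟨i1, h1⟩ := hU1
  obtain ⟨i2, h2⟩ := hD1
  obtain ⟨i3, h3⟩ := hU2
  obtain ⟨i4, h4⟩ := hD2
  have b1 := one_le (fun i => f (i-1) ≤ 0 ∧ f i = 1) ⟨i1, h1⟩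
  have b2 := one_le (fun i => f (i-1) = 1 ∧ f i ≤ 0) ⟨i2, h2⟩
  have b3 := one_le (fun i => f (i-1) = -1 ∧ 0 ≤ f i) ⟨i3, h3⟩
  have b4 := one_le (fun i => 0 ≤ f (i-1) ∧ f i = -1) ⟨i4, h4⟩
  beta_reduce at b1 b2 b3 b4
  omega

end GridWalk

/-- every closed walk visiting at least two distinct pixels makes at least four
90°-turns (U-turns counting as two). -/
theorem four_turns (n : ℕ) (w : GridWalk n) (h : ∃ i j, w.v i ≠ w.v j) :
    4 ≤ w.turns := by
  have hzero : ∀ (c : Pixel → ℤ), (c = Prod.fst ∨ c = Prod.snd) →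
      ∑ i, c (w.dir i) = 0 := by
    rintro c (rfl | rfl)
    · rw [← Prod.fst_sum, w.sum_dir']; rfl
    · rw [← Prod.snd_sum, w.sum_dir']; rfl
  have vals : ∀ (c : Pixel → ℤ), (c = Prod.fst ∨ c = Prod.snd) → ∀ i,
      c (w.dir i) = 1 ∨ c (w.dir i) = 0 ∨ c (w.dir i) = -1 := by
    rintro c (rfl | rfl) i <;> rcases w.dir_unit' i with h | h | h | h <;> rw [h] <;> simp
  have find_neg : ∀ (c : Pixel → ℤ), (c = Prod.fst ∨ c = Prod.snd) →
      (∃ a, c (w.dir a) = 1) → ∃ b, c (w.dir b) = -1 := by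
    rintro c hc ⟨a, ha⟩
    by_contra hcon
    push_neg at hcon
    have nonneg : ∀ i ∈ Finset.univ, (0:ℤ) ≤ c (w.dir i) := by
      intro i _
      have h1 := vals c hc i
      have h2 := hcon i
      omega
    have := (Finset.sum_eq_zero_iff_of_nonneg nonneg).1 (hzero c hc) a (Finset.mem_univ a)
    omega
  have find_pos : ∀ (c : Pixel → ℤ), (c = Prod.fst ∨ c = Prod.snd) →
      (∃ b, c (w.dir b) = -1) → ∃ a, c (w.dir a) = 1 := by
    rintro c hc ⟨b, hb⟩
    by_contra hcon
    push_neg at hcon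
    have nonpos : ∀ i ∈ Finset.univ, c (w.dir i) ≤ (0:ℤ) := by
      intro i _
      have h1 := vals c hc i
      have h2 := hcon i
      omega
    have := (Finset.sum_eq_zero_iff_of_nonpos nonpos).1 (hzero c hc) b (Finset.mem_univ b)
    omega
  rcases w.dir_unit' 0 with h0 | h0 | h0 | h0
  · have ha : Prod.fst (w.dir (0 : ZMod (n+1))) = 1 := by rw [h0]
    obtain ⟨b, hb⟩ := find_neg _ (Or.inl rfl) ⟨0, ha⟩
    exact w.main_bound _ (Or.inl rfl) 0 b ha hb
  · have hb : Prod.fst (w.dir (0 : ZMod (n+1))) = -1 := by rw [h0]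
    obtain ⟨a, ha⟩ := find_pos _ (Or.inl rfl) ⟨0, hb⟩
    exact w.main_bound _ (Or.inl rfl) a 0 ha hb
  · have ha : Prod.snd (w.dir (0 : ZMod (n+1))) = 1 := by rw [h0]
    obtain ⟨b, hb⟩ := find_neg _ (Or.inr rfl) ⟨0, ha⟩
    exact w.main_bound _ (Or.inr rfl) 0 b ha hb
  · have hb : Prod.snd (w.dir (0 : ZMod (n+1))) = -1 := by rw [h0]
    obtain ⟨a, ha⟩ := find_pos _ (Or.inr rfl) ⟨0, hb⟩
    exact w.main_bound _ (Or.inr rfl) a 0 ha hb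
end

section
/- In any closed walk in a 2-dimensional grid graph, the number of turns made on any fixed row (i.e., on pixels with a fixed y-coordinate), counting U-turns as two, is even. -/
section Aux

variable {n : ℕ}

private def vertZ (w : GridWalk n) (j : ZMod (n + 1)) : ZMod 2 :=
  if (w.dir j).1 = 0 then 1 else 0

/-- Parity of a turn: odd iff exactly one of the two directions is vertical. -/
private lemma turnAt_parity (w : GridWalk n) (i : ZMod (n + 1)) :
    ((w.turnAt i : ZMod 2)) = vertZ w (i - 1) + vertZ w i := by
  have h1 : IsUnitStep (w.dir (i - 1)) := w.step (i - 1)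
  have h2 : IsUnitStep (w.dir i) := w.step i
  unfold GridWalk.turnAt GridWalk.turnCost vertZ
  rcases h1 with h1 | h1 | h1 | h1 <;> rcases h2 with h2 | h2 | h2 | h2 <;>
    rw [h1, h2] <;> simp [Prod.ext_iff] <;> decide

private def rowZ (w : GridWalk n) (y : ℤ) (i : ZMod (n + 1)) : ZMod 2 :=
  if (w.v i).2 = y then 1 else 0

private def bZ (w : GridWalk n) (y : ℤ) (i : ZMod (n + 1)) : ZMod 2 :=
  if (w.v i).2 ≤ y then 1 else 0

private lemma step_identity (w : GridWalk n) (y : ℤ) (j : ZMod (n + 1)) :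
    (rowZ w y j + rowZ w y (j + 1)) * vertZ w j =
      (bZ w y j + bZ w y (j + 1)) + (bZ w (y - 1) j + bZ w (y - 1) (j + 1)) := by
  have h : IsUnitStep (w.dir j) := w.step j
  have hsnd : (w.v (j + 1)).2 = (w.v j).2 + (w.dir j).2 := by
    simp [GridWalk.dir]
  unfold rowZ bZ vertZ
  rcases h with h | h | h | h <;> rw [h] at hsnd ⊢ <;>
    simp only [Prod.fst, Prod.snd] at hsnd ⊢ <;>
    split_ifs <;> first | rfl | decide | omega

private lemma sum_shift (f : ZMod (n + 1) → ZMod 2) :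
    ∑ j : ZMod (n + 1), f (j + 1) = ∑ j : ZMod (n + 1), f j :=
  Equiv.sum_comp (Equiv.addRight (1 : ZMod (n + 1))) f

end Aux

/-- in any closed walk, the number of turns made on any fixed row
(U-turns counting as two) is even. -/
theorem row_turns_even (n : ℕ) (w : GridWalk n) (y : ℤ) :
    Even (∑ i, if (w.v i).2 = y then w.turnAt i else 0) := by
  suffices h : ((∑ i, if (w.v i).2 = y then w.turnAt i else 0 : ℕ) : ZMod 2) = 0 by
    exact even_iff_two_dvd.mpr ((ZMod.natCast_eq_zero_iff _ 2).mp h)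
  push_cast
  have key : ∀ i : ZMod (n + 1),
      ((if (w.v i).2 = y then (w.turnAt i : ZMod 2) else 0)) =
        rowZ w y i * vertZ w (i - 1) + rowZ w y i * vertZ w i := by
    intro i
    rw [turnAt_parity]
    unfold rowZ
    split_ifs <;> ring
  calc (∑ i : ZMod (n + 1), if (w.v i).2 = y then (w.turnAt i : ZMod 2) else 0)
      = ∑ i : ZMod (n + 1), (rowZ w y i * vertZ w (i - 1) + rowZ w y i * vertZ w i) := by
        exact Finset.sum_congr rfl fun i _ => key i
    _ = (∑ i : ZMod (n + 1), rowZ w y i * vertZ w (i - 1))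
          + ∑ i : ZMod (n + 1), rowZ w y i * vertZ w i := Finset.sum_add_distrib
    _ = (∑ j : ZMod (n + 1), rowZ w y (j + 1) * vertZ w j)
          + ∑ j : ZMod (n + 1), rowZ w y j * vertZ w j := by
        congr 1
        rw [← sum_shift (fun i => rowZ w y i * vertZ w (i - 1))]
        exact Finset.sum_congr rfl fun j _ => by simp
    _ = ∑ j : ZMod (n + 1), (rowZ w y j + rowZ w y (j + 1)) * vertZ w j := by
        rw [← Finset.sum_add_distrib]
        exact Finset.sum_congr rfl fun j _ => by ring
    _ = ∑ j : ZMod (n + 1),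
          ((bZ w y j + bZ w y (j + 1)) + (bZ w (y - 1) j + bZ w (y - 1) (j + 1))) :=
        Finset.sum_congr rfl fun j _ => step_identity w y j
    _ = 0 := by
        rw [Finset.sum_add_distrib, Finset.sum_add_distrib, Finset.sum_add_distrib,
          sum_shift (bZ w y), sum_shift (bZ w (y - 1))]
        ring_nf
        simp [CharTwo.two_eq_zero]
end

section
/- Any closed walk that covers all pixels of an m×n rectangular grid graph with m, n ≥ 2 makes at least 2·min(m,n) turns, counting U-turns as two. -/
/-- The m×n rectangular grid graph. -/
def rectGrid (m nn : ℕ) : Set Pixel :=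
  {p | 1 ≤ p.1 ∧ p.1 ≤ (m : ℤ) ∧ 1 ≤ p.2 ∧ p.2 ≤ (nn : ℤ)}

namespace RectAux

open GridWalk

variable {n : ℕ}

lemma isUnitStep_dir (w : GridWalk n) (i : ZMod (n+1)) : IsUnitStep (w.dir i) := w.step i

lemma v_add_dir (w : GridWalk n) (i : ZMod (n+1)) : w.v (i + 1) = w.v i + w.dir i := by
  simp [dir]

lemma dir_eq_of_turnAt_eq_zero (w : GridWalk n) (k : ZMod (n+1)) (h : w.turnAt k = 0) :
    w.dir k = w.dir (k - 1) := by
  unfold turnAt turnCost at h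
  split_ifs at h with h1 h2
  · exact h1

/-- The sum of all directions of a closed walk is zero. -/
lemma sum_dir (w : GridWalk n) : ∑ i, w.dir i = 0 := by
  have h1 : ∑ i, w.v (i + 1) = ∑ i, w.v i :=
    Fintype.sum_equiv (Equiv.addRight (1 : ZMod (n+1))) _ _ (fun j => rfl)
  simp only [dir, Finset.sum_sub_distrib, h1, sub_self]

/-- The directions cannot be globally constant. -/
lemma not_dir_const (w : GridWalk n) (i : ZMod (n+1)) : ¬ (∀ j, w.dir j = w.dir i) := by
  intro h
  have hs := sum_dir w
  have hcard : (Finset.univ : Finset (ZMod (n+1))).card = n + 1 := by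
    simp [ZMod.card]
  rw [Finset.sum_congr rfl (fun j _ => h j), Finset.sum_const, hcard] at hs
  have h1 : (n+1 : ℤ) * (w.dir i).1 = 0 := by
    have := congrArg Prod.fst hs
    simpa [nsmul_eq_mul] using this
  have h2 : (n+1 : ℤ) * (w.dir i).2 = 0 := by
    have := congrArg Prod.snd hs
    simpa [nsmul_eq_mul] using this
  have hpos : (0:ℤ) < (n+1 : ℤ) := by positivity
  rcases isUnitStep_dir w i with h' | h' | h' | h' <;> rw [h'] at h1 h2 <;> simp at h1 h2 <;> omega

lemma dir_chain (w : GridWalk n) (j : ZMod (n+1)) (M : ℕ)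
    (h : ∀ u : ℕ, u < M → w.turnAt (j + 1 + u) = 0) :
    ∀ u : ℕ, u ≤ M → w.dir (j + u) = w.dir j := by
  intro u hu
  induction u with
  | zero => simp
  | succ u ih =>
    have h1 := dir_eq_of_turnAt_eq_zero w (j + 1 + u) (h u (by omega))
    have e1 : j + 1 + (u : ZMod (n+1)) = j + ((u+1 : ℕ) : ZMod (n+1)) := by push_cast; ring
    have e2 : j + 1 + (u : ZMod (n+1)) - 1 = j + (u : ZMod (n+1)) := by ring
    rw [e2, e1] at h1
    rw [h1, ih (by omega)]

lemma row_chain (w : GridWalk n) (j : ZMod (n+1)) (M : ℕ)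
    (h : ∀ u : ℕ, u < M → (w.dir (j + u)).2 = 0) :
    ∀ u : ℕ, u ≤ M → (w.v (j + u)).2 = (w.v j).2 := by
  intro u hu
  induction u with
  | zero => simp
  | succ u ih =>
    have e1 : j + ((u+1 : ℕ) : ZMod (n+1)) = (j + u) + 1 := by push_cast; ring
    rw [e1, v_add_dir w (j + u), Prod.snd_add, h u (by omega), add_zero, ih (by omega)]

/-- Key lemma: a horizontal step in row `r` forces two turns at distinct indices in row `r`. -/
lemma two_turns (w : GridWalk n) (r : ℤ) (i : ZMod (n+1))
    (hd : (w.dir i).2 = 0) (hv : (w.v i).2 = r) :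
    ∃ a b : ZMod (n+1), a ≠ b ∧ (w.v a).2 = r ∧ (w.v b).2 = r ∧
      w.turnAt a ≠ 0 ∧ w.turnAt b ≠ 0 := by
  have hcast : ∀ a : ZMod (n+1), ((a.val : ℕ) : ZMod (n+1)) = a :=
    fun a => (ZMod.natCast_val a).trans (ZMod.cast_id _ _)
  -- there exists a nonzero turn somewhere
  have exists_turn : ∃ j, w.turnAt j ≠ 0 := by
    by_contra hall
    push_neg at hall
    refine not_dir_const w i (fun j => ?_)
    have := dir_chain w i (n+1) (fun u _ => hall _) (j - i).val (le_of_lt (by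
      simpa using ZMod.val_lt (j - i)))
    rwa [hcast, add_sub_cancel] at this
  obtain ⟨j₁, hj₁⟩ := exists_turn
  have hEx1 : ∃ t : ℕ, t < n+1 ∧ w.turnAt (i + 1 + t) ≠ 0 :=
    ⟨(j₁ - (i+1)).val, ZMod.val_lt (j₁ - (i+1)), by rwa [hcast, add_sub_cancel]⟩
  have hEx2 : ∃ s : ℕ, s < n+1 ∧ w.turnAt (i - s) ≠ 0 :=
    ⟨(i - j₁).val, by simpa using ZMod.val_lt (i - j₁), by rwa [hcast, sub_sub_cancel]⟩
  set t₁ := Nat.find hEx1 with ht₁def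
  set s₁ := Nat.find hEx2 with hs₁def
  have ht₁ := Nat.find_spec hEx1
  have hs₁ := Nat.find_spec hEx2
  have ht₁min : ∀ u : ℕ, u < t₁ → w.turnAt (i + 1 + u) = 0 := by
    intro u hu
    have := Nat.find_min hEx1 hu
    push_neg at this
    exact this (by omega)
  have hs₁min : ∀ u : ℕ, u < s₁ → w.turnAt (i - u) = 0 := by
    intro u hu
    have := Nat.find_min hEx2 hu
    push_neg at this
    exact this (by omega)
  set j₀ : ZMod (n+1) := i - (s₁ : ZMod (n+1)) with hj₀def
  set M : ℕ := s₁ + t₁ with hMdef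
  have Hturn0 : ∀ u : ℕ, u < M → w.turnAt (j₀ + 1 + u) = 0 := by
    intro u hu
    by_cases hcase : u < s₁
    · obtain ⟨s', hs'1, hs'2⟩ : ∃ s', s₁ = s' + 1 + u ∧ s' < s₁ := ⟨s₁ - 1 - u, by omega, by omega⟩
      have e : (s₁ : ZMod (n+1)) = ((s' : ℕ) : ZMod (n+1)) + 1 + u := by
        rw [hs'1]; push_cast; ring
      have e2 : j₀ + 1 + (u : ZMod (n+1)) = i - ((s' : ℕ) : ZMod (n+1)) := by
        rw [hj₀def, e]; ring
      rw [e2]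
      exact hs₁min _ hs'2
    · have e : j₀ + 1 + (u : ZMod (n+1)) = i + 1 + ((u - s₁ : ℕ) : ZMod (n+1)) := by
        have : u = s₁ + (u - s₁) := by omega
        rw [hj₀def]
        nth_rewrite 1 [this]
        push_cast; ring
      rw [e]
      exact ht₁min _ (by omega)
  have dchain := dir_chain w j₀ M Hturn0
  have hj₀i : j₀ + (s₁ : ZMod (n+1)) = i := by rw [hj₀def]; ring
  have hdirj₀ : w.dir j₀ = w.dir i := by
    have := dchain s₁ (by omega)
    rw [hj₀i] at this
    exact this.symm
  have rchain := row_chain w j₀ (M+1) (fun u hu => by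
    rw [dchain u (by omega), hdirj₀]; exact hd)
  have hrowj₀ : (w.v j₀).2 = r := by
    have := rchain s₁ (by omega)
    rw [hj₀i, hv] at this
    exact this.symm
  refine ⟨j₀ + ((M+1 : ℕ) : ZMod (n+1)), j₀, ?_, ?_, hrowj₀, ?_, hs₁.2⟩
  · -- a ≠ b
    intro hab
    have hz : ((M+1 : ℕ) : ZMod (n+1)) = 0 := by
      have := congrArg (fun x => x - j₀) hab
      simpa using this
    have hdvd : (n+1) ∣ (M+1) := (ZMod.natCast_eq_zero_iff _ _).mp hz
    have hMn : n ≤ M := by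
      have := Nat.le_of_dvd (by omega) hdvd
      omega
    refine not_dir_const w j₀ (fun j => ?_)
    have := dchain (j - j₀).val (by
      have := ZMod.val_lt (j - j₀); omega)
    rwa [hcast, add_sub_cancel] at this
  · have := rchain (M+1) (by omega)
    rw [this, hrowj₀]
  · have e : j₀ + ((M+1 : ℕ) : ZMod (n+1)) = i + 1 + (t₁ : ZMod (n+1)) := by
      rw [hj₀def, hMdef]; push_cast; ring
    rw [e]
    exact ht₁.2


/-- If every row `1..m'` contains a horizontal step, then there are at least `2*m'` turns. -/
lemma main_rows (w : GridWalk n) (m' : ℕ)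
    (H : ∀ r : ℤ, 1 ≤ r → r ≤ (m' : ℤ) → ∃ i, (w.dir i).2 = 0 ∧ (w.v i).2 = r) :
    2 * m' ≤ w.turns := by
  have key : ∀ r : ℤ, ∃ a b : ZMod (n+1), (1 ≤ r → r ≤ (m' : ℤ) →
      a ≠ b ∧ (w.v a).2 = r ∧ (w.v b).2 = r ∧ w.turnAt a ≠ 0 ∧ w.turnAt b ≠ 0) := by
    intro r
    by_cases hr : 1 ≤ r ∧ r ≤ (m' : ℤ)
    · obtain ⟨i, hd, hv⟩ := H r hr.1 hr.2
      obtain ⟨a, b, h⟩ := two_turns w r i hd hv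
      exact ⟨a, b, fun _ _ => h⟩
    · exact ⟨0, 0, fun h1 h2 => absurd ⟨h1, h2⟩ hr⟩
  choose a b hab using key
  have hmem : ∀ r ∈ Finset.Icc (1:ℤ) (m' : ℤ), a r ≠ b r ∧ (w.v (a r)).2 = r ∧
      (w.v (b r)).2 = r ∧ w.turnAt (a r) ≠ 0 ∧ w.turnAt (b r) ≠ 0 := by
    intro r hr
    rw [Finset.mem_Icc] at hr
    exact hab r hr.1 hr.2
  have hrow : ∀ r ∈ Finset.Icc (1:ℤ) (m' : ℤ), ∀ j ∈ ({a r, b r} : Finset (ZMod (n+1))),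
      (w.v j).2 = r := by
    intro r hr j hj
    obtain ⟨_, hax, hbx, _, _⟩ := hmem r hr
    rcases Finset.mem_insert.mp hj with h | h
    · rw [h]; exact hax
    · rw [Finset.mem_singleton] at h; rw [h]; exact hbx
  have hdisj : (↑(Finset.Icc (1:ℤ) (m' : ℤ)) : Set ℤ).PairwiseDisjoint
      (fun r => ({a r, b r} : Finset (ZMod (n+1)))) := by
    intro x hx y hy hxy
    simp only [Function.onFun]
    rw [Finset.disjoint_left]
    intro j hjx hjy
    exact hxy ((hrow x hx j hjx).symm.trans (hrow y hy j hjy))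
  have hcard : (Finset.Icc (1:ℤ) (m' : ℤ)).card = m' := by
    rw [Int.card_Icc]
    omega
  calc 2 * m' = ∑ _r ∈ Finset.Icc (1:ℤ) (m' : ℤ), 2 := by
        rw [Finset.sum_const, hcard, smul_eq_mul, mul_comm]
    _ ≤ ∑ r ∈ Finset.Icc (1:ℤ) (m' : ℤ), ∑ j ∈ ({a r, b r} : Finset (ZMod (n+1))), w.turnAt j := by
        apply Finset.sum_le_sum
        intro r hr
        obtain ⟨hne, _, _, hta, htb⟩ := hmem r hr
        rw [Finset.sum_pair hne]
        omega
    _ = ∑ j ∈ (Finset.Icc (1:ℤ) (m' : ℤ)).biUnion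
          (fun r => ({a r, b r} : Finset (ZMod (n+1)))), w.turnAt j :=
        (Finset.sum_biUnion hdisj).symm
    _ ≤ ∑ j, w.turnAt j := Finset.sum_le_sum_of_subset (Finset.subset_univ _)
    _ = w.turns := rfl

/-- The transposed walk. -/
def transpose (w : GridWalk n) : GridWalk n where
  v := fun i => (w.v i).swap
  step := fun i => by
    have h := w.step i
    rcases h with h | h | h | h <;>
      · simp only [IsUnitStep]
        rw [show (w.v (i+1)).swap - (w.v i).swap = ((w.v (i+1)) - (w.v i)).swap from rfl, h]
        simp [Prod.swap]

lemma transpose_dir (w : GridWalk n) (i : ZMod (n+1)) :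
    (transpose w).dir i = (w.dir i).swap := rfl

lemma swap_neg (p : Pixel) : (-p).swap = -p.swap := rfl

lemma turnCost_swap (d e : Pixel) : turnCost d.swap e.swap = turnCost d e := by
  unfold turnCost
  have h1 : (e.swap = d.swap) ↔ (e = d) := Prod.swap_injective.eq_iff
  have h2 : (e.swap = -d.swap) ↔ (e = -d) := by rw [← swap_neg]; exact Prod.swap_injective.eq_iff
  by_cases hed : e = d
  · rw [if_pos hed, if_pos (h1.mpr hed)]
  · rw [if_neg hed, if_neg (fun h => hed (h1.mp h))]
    by_cases hed2 : e = -d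
    · rw [if_pos (h2.mpr hed2), if_pos hed2]
    · rw [if_neg (fun h => hed2 (h2.mp h)), if_neg hed2]

lemma transpose_turnAt (w : GridWalk n) (i : ZMod (n+1)) :
    (transpose w).turnAt i = w.turnAt i := by
  unfold turnAt
  rw [transpose_dir, transpose_dir]
  exact turnCost_swap _ _

lemma transpose_turns (w : GridWalk n) : (transpose w).turns = w.turns := by
  unfold turns
  exact Finset.sum_congr rfl (fun i _ => transpose_turnAt w i)

end RectAux

/-- any closed walk covering all pixels of the m×n rectangular grid graph with
m, n ≥ 2 makes at least 2·min(m,n) turns (U-turns counting as two). -/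
theorem rect_lower_bound (m nn : ℕ) (hm : 2 ≤ m) (hn : 2 ≤ nn) (k : ℕ) (w : GridWalk k)
    (hmem : ∀ i, w.v i ∈ rectGrid m nn) (hcov : ∀ p ∈ rectGrid m nn, ∃ i, w.v i = p) :
    2 * min m nn ≤ w.turns := by
  by_cases H : ∀ r : ℤ, 1 ≤ r → r ≤ (nn : ℤ) → ∃ i, (w.dir i).2 = 0 ∧ (w.v i).2 = r
  · have h1 := RectAux.main_rows w nn H
    exact le_trans (Nat.mul_le_mul_left 2 (min_le_right m nn)) h1
  · push_neg at H
    obtain ⟨r, hr1, hr2, hnone⟩ := H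
    have Hc : ∀ c : ℤ, 1 ≤ c → c ≤ (m : ℤ) →
        ∃ i, ((RectAux.transpose w).dir i).2 = 0 ∧ ((RectAux.transpose w).v i).2 = c := by
      intro c hc1 hc2
      obtain ⟨i, hi⟩ := hcov (c, r) ⟨hc1, hc2, hr1, hr2⟩
      have hvr : (w.v i).2 = r := by rw [hi]
      have hd1 : (w.dir i).1 = 0 := by
        rcases w.step i with h | h | h | h
        · exact absurd hvr (hnone i (by rw [GridWalk.dir, h]))
        · exact absurd hvr (hnone i (by rw [GridWalk.dir, h]))
        · rw [GridWalk.dir, h]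
        · rw [GridWalk.dir, h]
      refine ⟨i, hd1, ?_⟩
      show (w.v i).1 = c
      rw [hi]
    have h1 := RectAux.main_rows (RectAux.transpose w) m Hc
    rw [RectAux.transpose_turns] at h1
    exact le_trans (Nat.mul_le_mul_left 2 (min_le_left m nn)) h1
end
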